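/- Let V and V' be finite types with |V| = |V'|, let F be a nonempty superset-closed family of finsets of V and F' a nonempty superset-closed family of finsets of V', and let φ be a graph isomorphism from the TAR graph of F to the TAR graph of F'. Then |φ(S)| = |S| holds for every S ∈ F if and only if there exists a bijection ψ : V ≃ V' such that φ(S) equals the image finset ψ(S) for every S ∈ F. -/

import Mathlib

set_option linter.unusedSectionVars false
set_option maxHeartbeats 1000000

variable {V : Type*} [Fintype V] [DecidableEq V]

/-- A family of finsets is superset-closed if it is closed under taking supersets. -/
def SupersetClosed (F : Finset (Finset V)) : Prop :=
  ∀ ⦃S T : Finset V⦄, S ∈ F → S ⊆ T → T ∈ F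

/-- A minimal member of a family: a member no proper subset of which is a member. -/
def IsMinimalMem (F : Finset (Finset V)) (M : Finset V) : Prop :=
  M ∈ F ∧ ∀ M' : Finset V, M' ⊂ M → M' ∉ F

/-- The TAR graph of a family of finsets: vertices are the members of the family,
two members being adjacent iff their symmetric difference has exactly one element. -/
def TARGraph (F : Finset (Finset V)) : SimpleGraph {S : Finset V // S ∈ F} where
  Adj S T := (symmDiff S.1 T.1).card = 1
  symm := ⟨fun (S T : {S : Finset V // S ∈ F}) h => by show (symmDiff T.1 S.1).card = 1; rw [symmDiff_comm]; exact h⟩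
  loopless := ⟨fun S h => by simp [symmDiff_self] at h⟩

instance (F : Finset (Finset V)) : DecidableRel (TARGraph F).Adj :=
  fun S T => inferInstanceAs (Decidable ((symmDiff S.1 T.1).card = 1))

open Finset

lemma aux_subset_of_symmDiff {A B : Finset V} (h : (symmDiff A B).card = 1)
    (hlt : A.card < B.card) : A ⊆ B ∧ (B \ A).card = 1 := by
  have hd : Disjoint (A \ B) (B \ A) := disjoint_sdiff_sdiff
  rw [symmDiff_def, sup_eq_union] at h
  rw [card_union_of_disjoint hd] at h
  have h1 : (A ∩ B).card + (A \ B).card = A.card := card_inter_add_card_sdiff A B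
  have h2 : (B ∩ A).card + (B \ A).card = B.card := card_inter_add_card_sdiff B A
  rw [inter_comm] at h2
  have ha : (A \ B).card = 0 := by omega
  exact ⟨sdiff_eq_empty_iff_subset.mp (card_eq_zero.mp ha), by omega⟩

lemma aux_eq_erase {A : Finset V} {x : V} (h : Finset.univ \ A = {x}) :
    A = Finset.univ.erase x := by
  rw [erase_eq, ← h, sdiff_sdiff_right_self]
  simp [inf_eq_inter, inter_eq_right.mpr (subset_univ A)]

lemma aux_erase_inj {x y : V} (h : Finset.univ.erase x = Finset.univ.erase y) : x = y := by
  by_contra hne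
  have : x ∈ Finset.univ.erase y := mem_erase.mpr ⟨hne, mem_univ x⟩
  rw [← h] at this
  exact (notMem_erase x _) this

theorem stmt8 {V' : Type*} [Fintype V'] [DecidableEq V']
    (F : Finset (Finset V)) (hne : F.Nonempty) (hsup : SupersetClosed F)
    (F' : Finset (Finset V')) (hne' : F'.Nonempty) (hsup' : SupersetClosed F')
    (hcard : Fintype.card V = Fintype.card V')
    (φ : TARGraph F ≃g TARGraph F') :
    (∀ S : {S : Finset V // S ∈ F}, (φ S).1.card = S.1.card) ↔
    ∃ ψ : V ≃ V', ∀ S : {S : Finset V // S ∈ F}, (φ S).1 = S.1.image ψ := by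
  constructor
  · intro hc
    obtain ⟨S₀, hS₀⟩ := hne
    have hU : (Finset.univ : Finset V) ∈ F := hsup hS₀ (subset_univ _)
    obtain ⟨S₀', hS₀'⟩ := hne'
    have hU' : (Finset.univ : Finset V') ∈ F' := hsup' hS₀' (subset_univ _)
    have hc' : ∀ S' : {S : Finset V' // S ∈ F'}, (φ.symm S').1.card = S'.1.card := by
      intro S'
      have := hc (φ.symm S')
      rw [RelIso.apply_symm_apply] at this
      exact this.symm
    have hφU : (φ ⟨Finset.univ, hU⟩).1 = Finset.univ := by
      apply Finset.eq_univ_of_card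
      rw [hc]
      simp [hcard]
    have hφU' : (φ.symm ⟨Finset.univ, hU'⟩).1 = Finset.univ := by
      apply Finset.eq_univ_of_card
      rw [hc']
      simp [hcard]
    -- key adjacency transfer lemma
    have key : ∀ (S T : {S : Finset V // S ∈ F}), S.1 ⊆ T.1 → (T.1 \ S.1).card = 1 →
        (φ S).1 ⊆ (φ T).1 ∧ ((φ T).1 \ (φ S).1).card = 1 := by
      intro S T hsub hd
      have hadj : (TARGraph F).Adj S T := by
        show (symmDiff S.1 T.1).card = 1
        rw [symmDiff_def, sup_eq_union, sdiff_eq_empty_iff_subset.mpr hsub, empty_union]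
        exact hd
      have hadj' : (TARGraph F').Adj (φ S) (φ T) := φ.map_rel_iff.mpr hadj
      have hlt : (φ S).1.card < (φ T).1.card := by
        rw [hc, hc]
        have := card_sdiff_add_card_eq_card hsub
        omega
      exact aux_subset_of_symmDiff hadj' hlt
    have key' : ∀ (S T : {S : Finset V' // S ∈ F'}), S.1 ⊆ T.1 → (T.1 \ S.1).card = 1 →
        (φ.symm S).1 ⊆ (φ.symm T).1 ∧ ((φ.symm T).1 \ (φ.symm S).1).card = 1 := by
      intro S T hsub hd
      have hadj : (TARGraph F').Adj S T := by
        show (symmDiff S.1 T.1).card = 1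
        rw [symmDiff_def, sup_eq_union, sdiff_eq_empty_iff_subset.mpr hsub, empty_union]
        exact hd
      have hadj' : (TARGraph F).Adj (φ.symm S) (φ.symm T) := φ.symm.map_rel_iff.mpr hadj
      have hlt : (φ.symm S).1.card < (φ.symm T).1.card := by
        rw [hc', hc']
        have := card_sdiff_add_card_eq_card hsub
        omega
      exact aux_subset_of_symmDiff hadj' hlt
    -- construct g
    have hgx : ∀ (v : V) (h : Finset.univ.erase v ∈ F),
        ∃ v' : V', (φ ⟨Finset.univ.erase v, h⟩).1 = Finset.univ.erase v' := by
      intro v h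
      have hsub : (Finset.univ.erase v) ⊆ (Finset.univ : Finset V) := erase_subset _ _
      have hd : ((Finset.univ : Finset V) \ Finset.univ.erase v).card = 1 := by
        rw [erase_eq, sdiff_sdiff_right_self]
        simp
      obtain ⟨h1, h2⟩ := key ⟨_, h⟩ ⟨_, hU⟩ hsub hd
      rw [hφU] at h2
      obtain ⟨x, hx⟩ := card_eq_one.mp h2
      exact ⟨x, aux_eq_erase hx⟩
    choose g hg using hgx
    have hgx' : ∀ (v' : V') (h : Finset.univ.erase v' ∈ F'),
        ∃ v : V, (φ.symm ⟨Finset.univ.erase v', h⟩).1 = Finset.univ.erase v := by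
      intro v h
      have hsub : (Finset.univ.erase v) ⊆ (Finset.univ : Finset V') := erase_subset _ _
      have hd : ((Finset.univ : Finset V') \ Finset.univ.erase v).card = 1 := by
        rw [erase_eq, sdiff_sdiff_right_self]
        simp
      obtain ⟨h1, h2⟩ := key' ⟨_, h⟩ ⟨_, hU'⟩ hsub hd
      rw [hφU'] at h2
      obtain ⟨x, hx⟩ := card_eq_one.mp h2
      exact ⟨x, aux_eq_erase hx⟩
    choose g' hg' using hgx'
    set P : V → Prop := fun v => Finset.univ.erase v ∈ F with hP
    set P' : V' → Prop := fun v' => Finset.univ.erase v' ∈ F' with hP'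
    have memg : ∀ v (h : P v), P' (g v h) := by
      intro v h
      have := (φ ⟨Finset.univ.erase v, h⟩).2
      rwa [hg v h] at this
    have memg' : ∀ v' (h : P' v'), P (g' v' h) := by
      intro v' h
      have := (φ.symm ⟨Finset.univ.erase v', h⟩).2
      rwa [hg' v' h] at this
    have hginv : ∀ v (h : P v), g' (g v h) (memg v h) = v := by
      intro v h
      have heq : (⟨Finset.univ.erase (g v h), memg v h⟩ : {S : Finset V' // S ∈ F'}) =
          φ ⟨Finset.univ.erase v, h⟩ := Subtype.ext (hg v h).symm
      have := hg' (g v h) (memg v h)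
      rw [heq, RelIso.symm_apply_apply] at this
      exact (aux_erase_inj this).symm
    have hginv' : ∀ v' (h : P' v'), g (g' v' h) (memg' v' h) = v' := by
      intro v' h
      have heq : (⟨Finset.univ.erase (g' v' h), memg' v' h⟩ : {S : Finset V // S ∈ F}) =
          φ.symm ⟨Finset.univ.erase v', h⟩ := Subtype.ext (hg' v' h).symm
      have := hg (g' v' h) (memg' v' h)
      rw [heq, RelIso.apply_symm_apply] at this
      exact (aux_erase_inj this).symm
    let e : {v // P v} ≃ {v' // P' v'} :=
      { toFun := fun x => ⟨g x.1 x.2, memg _ _⟩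
        invFun := fun x => ⟨g' x.1 x.2, memg' _ _⟩
        left_inv := fun x => Subtype.ext (hginv x.1 x.2)
        right_inv := fun x => Subtype.ext (hginv' x.1 x.2) }
    have hPdec : DecidablePred P := fun v => by rw [hP]; infer_instance
    have hPdec' : DecidablePred P' := fun v => by rw [hP']; infer_instance
    have hcardP : Fintype.card {v // ¬ P v} = Fintype.card {v' // ¬ P' v'} := by
      rw [Fintype.card_subtype_compl, Fintype.card_subtype_compl,
        Fintype.card_congr e, hcard]
    let f := Fintype.equivOfCardEq hcardP
    let ψ : V ≃ V' := ((Equiv.sumCompl P).symm.trans ((e.sumCongr f).trans (Equiv.sumCompl P')))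
    have hψ : ∀ v (h : P v), ψ v = g v h := by
      intro v h
      show (Equiv.sumCompl P') ((e.sumCongr f) ((Equiv.sumCompl P).symm v)) = _
      rw [Equiv.sumCompl_symm_apply_of_pos h]
      rfl
    -- main induction
    have main : ∀ n : ℕ, ∀ S : {S : Finset V // S ∈ F}, Fintype.card V - S.1.card = n →
        (φ S).1 = S.1.image ψ := by
      intro n
      induction n using Nat.strong_induction_on with
      | _ n ih =>
        intro S hn
        have hSsub : S.1 ⊆ Finset.univ := subset_univ _
        have hSle : S.1.card ≤ Fintype.card V := by
          rw [← card_univ]; exact card_le_card hSsub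
        have hsd : ((Finset.univ : Finset V) \ S.1).card = n := by
          rw [card_sdiff_of_subset hSsub, card_univ, hn]
        match n, hn, hsd, ih with
        | 0, hn, hsd, ih =>
          have hSu : S.1 = Finset.univ := Finset.eq_univ_of_card _ (by omega)
          have heq : S = ⟨Finset.univ, hU⟩ := Subtype.ext hSu
          rw [heq, hφU]
          exact (Finset.image_univ_equiv ψ).symm
        | 1, hn, hsd, ih =>
          obtain ⟨v, hv⟩ := card_eq_one.mp hsd
          have hSv : S.1 = Finset.univ.erase v := aux_eq_erase hv
          have hPv : P v := show Finset.univ.erase v ∈ F from hSv ▸ S.2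
          have hseq : S = ⟨Finset.univ.erase v, hPv⟩ := Subtype.ext hSv
          rw [hseq, hg v hPv]
          show Finset.univ.erase (g v hPv) = (Finset.univ.erase v).image ψ
          rw [Finset.image_erase ψ.injective, Finset.image_univ_equiv ψ, hψ v hPv]
        | (m+2), hn, hsd, ih =>
          obtain ⟨v₁, hv₁m, v₂, hv₂m, hv12⟩ := Finset.one_lt_card.mp (by omega : 1 < ((Finset.univ : Finset V) \ S.1).card)
          have hv₁ : v₁ ∉ S.1 := (mem_sdiff.mp hv₁m).2
          have hv₂ : v₂ ∉ S.1 := (mem_sdiff.mp hv₂m).2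
          have hT₁ : insert v₁ S.1 ∈ F := hsup S.2 (subset_insert _ _)
          have hT₂ : insert v₂ S.1 ∈ F := hsup S.2 (subset_insert _ _)
          have hc₁ : (insert v₁ S.1).card = S.1.card + 1 := card_insert_of_notMem hv₁
          have hc₂ : (insert v₂ S.1).card = S.1.card + 1 := card_insert_of_notMem hv₂
          have ih₁ : (φ ⟨insert v₁ S.1, hT₁⟩).1 = (insert v₁ S.1).image ψ :=
            ih (m+1) (by omega) ⟨_, hT₁⟩ (by rw [hc₁]; omega)
          have ih₂ : (φ ⟨insert v₂ S.1, hT₂⟩).1 = (insert v₂ S.1).image ψ :=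
            ih (m+1) (by omega) ⟨_, hT₂⟩ (by rw [hc₂]; omega)
          have hd₁ : ((insert v₁ S.1) \ S.1).card = 1 := by
            rw [insert_sdiff_cancel hv₁]; exact card_singleton _
          have hd₂ : ((insert v₂ S.1) \ S.1).card = 1 := by
            rw [insert_sdiff_cancel hv₂]; exact card_singleton _
          have hsub₁ := (key S ⟨_, hT₁⟩ (subset_insert _ _) hd₁).1
          have hsub₂ := (key S ⟨_, hT₂⟩ (subset_insert _ _) hd₂).1
          rw [ih₁] at hsub₁
          rw [ih₂] at hsub₂
          have hint : insert v₁ S.1 ∩ insert v₂ S.1 = S.1 := by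
            ext x
            simp only [mem_inter, mem_insert]
            constructor
            · rintro ⟨h1 | h1, h2 | h2⟩
              · exact absurd (h1.symm.trans h2) hv12
              · exact h2
              · exact h1
              · exact h1
            · intro h; exact ⟨Or.inr h, Or.inr h⟩
          have hsub : (φ S).1 ⊆ S.1.image ψ := by
            rw [← hint, Finset.image_inter _ _ ψ.injective]
            exact subset_inter hsub₁ hsub₂
          refine Finset.eq_of_subset_of_card_le hsub ?_
          rw [Finset.card_image_of_injective _ ψ.injective, hc]
    exact ⟨ψ, fun S => main _ S rfl⟩
  · rintro ⟨ψ, hψ⟩ S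
    rw [hψ S, Finset.card_image_of_injective _ ψ.injective]
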